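/- Let B be channel bounds and let w, u ∈ Σ^∞ be channel-compliant words that respect B with w ≈ u. Then for every channel participant ⟨p,q,i⟩, the projections of the encoded words onto the events of ⟨p,q,i⟩ agree: enc(w)|_{Σ_⟨p,q,i⟩} = enc(u)|_{Σ_⟨p,q,i⟩}. -/

import Mathlib

set_option maxHeartbeats 1000000
set_option autoImplicit false

universe u v w

namespace AMP

/-- Events: `send p q m` means participant `p` sends message `m` to `q`;
`recv p q m` means participant `q` receives message `m` that was sent by `p`. -/
inductive Ev (P : Type u) (V : Type v) : Type (max u v) where
  | send : P → P → V → Ev P V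
  | recv : P → P → V → Ev P V
deriving DecidableEq

namespace Ev
variable {P : Type u} {V : Type v}
/-- The events in which participant `r` is active (the alphabet `Σ_r`). -/
def Active (r : P) : Ev P V → Prop
  | .send p _ _ => p = r
  | .recv _ q _ => q = r
end Ev

/-- Finite or infinite words: `Σ^∞ = Σ* ∪ Σ^ω`. -/
abbrev Word (E : Type w) := List E ⊕ (ℕ → E)

namespace Word
variable {E : Type w}
/-- First `n` letters of a word, as a finite list. -/
def take : Word E → ℕ → List E
  | .inl u, n => u.take n
  | .inr f, n => (List.range n).map f
/-- The letter at position `n`, if any. -/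
def get? : Word E → ℕ → Option E
  | .inl u, n => u[n]?
  | .inr f, n => some (f n)
/-- `u` is a (finite) prefix of the word `w`. -/
def IsPref (u : List E) (w : Word E) : Prop := take w u.length = u
/-- Prepend a letter to a word. -/
def cons (a : E) : Word E → Word E
  | .inl u => .inl (a :: u)
  | .inr f => .inr fun n => match n with | 0 => a | k+1 => f k
end Word

/-- `pref L`: the set of finite prefixes of words of `L`. -/
def pref {E : Type w} (L : Set (Word E)) : Set (List E) := {u | ∃ w ∈ L, Word.IsPref u w}

/-- `first(L) = pref(L) ∩ Σ`: first letters of words of `L`. -/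
def firstL {E : Type w} (L : Set (Word E)) : Set E := {a | [a] ∈ pref L}

section Chan
variable {P : Type u} {V : Type v} [DecidableEq P]

/-- Message values of the subword of send events on channel `(p,q)`. -/
def sendMsgs (p q : P) (u : List (Ev P V)) : List V :=
  u.filterMap fun e => match e with
    | .send p' q' m => if p' = p ∧ q' = q then some m else none
    | .recv _ _ _ => none

/-- Message values of the subword of receive events on channel `(p,q)`. -/
def recvMsgs (p q : P) (u : List (Ev P V)) : List V :=
  u.filterMap fun e => match e with
    | .recv p' q' m => if p' = p ∧ q' = q then some m else none
    | .send _ _ _ => none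

/-- Position `i` of `w` is a send event matched by a later receive event. -/
def MatchedAt (w : Word (Ev P V)) (i : ℕ) : Prop :=
  ∃ p q m, Word.get? w i = some (Ev.send p q m) ∧
    ∃ j, i < j ∧ Word.get? w j = some (Ev.recv p q m) ∧
      sendMsgs p q (Word.take w (i+1)) = recvMsgs p q (Word.take w (j+1))

/-- Feasible eventual reception: any unmatched send in a finite prefix of `L`
can be matched in some extension belonging to `L`. -/
def FER (L : Set (Word (Ev P V))) : Prop :=
  ∀ u ∈ pref L, ∀ (i : ℕ) (p q : P) (m : V), u[i]? = some (Ev.send p q m) →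
    ¬ MatchedAt (Sum.inl u) i →
    ∃ w ∈ L, Word.IsPref u w ∧ MatchedAt w i

/-- Channel compliance (FIFO order): on each channel, the sequence of received
messages is a prefix of the sequence of sent messages, in every finite prefix. -/
def ChanCompliant (w : Word (Ev P V)) : Prop :=
  ∀ (n : ℕ) (p q : P), recvMsgs p q (Word.take w n) <+: sendMsgs p q (Word.take w n)

/-- FIFO words: channel compliant, and if finite then all sends are matched. -/
def FIFOw (w : Word (Ev P V)) : Prop :=
  ChanCompliant w ∧
  ∀ u : List (Ev P V), w = Sum.inl u → ∀ p q : P, sendMsgs p q u = recvMsgs p q u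

/-- `B`-bounded: at most `B` pending sends per channel, in every finite prefix. -/
def BBnd (B : ℕ) (w : Word (Ev P V)) : Prop :=
  ∀ (n : ℕ) (p q : P),
    (sendMsgs p q (Word.take w n)).length ≤ (recvMsgs p q (Word.take w n)).length + B

/-- The set `FIFO_B` of `B`-bounded FIFO words. -/
def FIFOB (B : ℕ) : Set (Word (Ev P V)) := {w | FIFOw w ∧ BBnd B w}

/-- `⊕B`-bounded: the total number of pending sends over all channels is at most `B`. -/
def SumBnd [Fintype P] (B : ℕ) (w : Word (Ev P V)) : Prop :=
  ∀ n : ℕ, (∑ p : P, ∑ q : P,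
    ((sendMsgs p q (Word.take w n)).length - (recvMsgs p q (Word.take w n)).length)) ≤ B
end Chan

section Indist
variable {P : Type u} {V : Type v} [DecidableEq P]

/-- One commutation of adjacent independent events. -/
inductive Swap : List (Ev P V) → List (Ev P V) → Prop
  | ss (w u : List (Ev P V)) (p q p' q' : P) (m m' : V) (h : p ≠ p') :
      Swap (w ++ Ev.send p q m :: Ev.send p' q' m' :: u)
           (w ++ Ev.send p' q' m' :: Ev.send p q m :: u)
  | rr (w u : List (Ev P V)) (p q p' q' : P) (m m' : V) (h : q ≠ q') :
      Swap (w ++ Ev.recv p q m :: Ev.recv p' q' m' :: u)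
           (w ++ Ev.recv p' q' m' :: Ev.recv p q m :: u)
  | sr (w u : List (Ev P V)) (p q p' q' : P) (m m' : V)
      (h1 : p ≠ q') (h2 : ¬ (p = p' ∧ q = q')) :
      Swap (w ++ Ev.send p q m :: Ev.recv p' q' m' :: u)
           (w ++ Ev.recv p' q' m' :: Ev.send p q m :: u)
  | srSame (w u : List (Ev P V)) (p q : P) (m m' : V)
      (h : (recvMsgs p q w).length < (sendMsgs p q w).length) :
      Swap (w ++ Ev.send p q m :: Ev.recv p q m' :: u)
           (w ++ Ev.recv p q m' :: Ev.send p q m :: u)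

/-- The indistinguishability relation `≈`: smallest equivalence containing `Swap`. -/
inductive Indist : List (Ev P V) → List (Ev P V) → Prop
  | of {w u} : Swap w u → Indist w u
  | refl (w) : Indist w w
  | symm {w u} : Indist w u → Indist u w
  | trans {w u v} : Indist w u → Indist u v → Indist w v

/-- `u ≼ v` iff `u·w ≈ v` for some finite `w`. -/
def IPref (u v : List (Ev P V)) : Prop := ∃ w, Indist (u ++ w) v

/-- `≼^ω` on infinite words: every finite prefix of `f` is `≼`-below a prefix of `g`. -/
def IPrefW (f g : ℕ → Ev P V) : Prop :=
  ∀ n, ∃ m, IPref ((List.range n).map f) ((List.range m).map g)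

/-- The closure `C(L)` under indistinguishability. -/
def closure (L : Set (Word (Ev P V))) : Set (Word (Ev P V)) :=
  {w' | (∃ u', w' = Sum.inl u' ∧ ∃ u, Sum.inl u ∈ L ∧ Indist u' u) ∨
        (∃ f', w' = Sum.inr f' ∧ ∃ f, Sum.inr f ∈ L ∧ IPrefW f' f)}

/-- Indistinguishability of (finite or infinite) words. -/
def WIndist : Word (Ev P V) → Word (Ev P V) → Prop
  | .inl u, .inl v => Indist u v
  | .inr f, .inr g => IPrefW f g ∧ IPrefW g f
  | _, _ => False
end Indist

/-- Participants enlarged by channel participants `⟨p,q,i⟩`. -/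
abbrev PCh (P : Type u) := P ⊕ (P × P × ℕ)

section Enc
variable {P : Type u} {V : Type v} [DecidableEq P]

/-- Embed an event into the enlarged alphabet. -/
def embedEv : Ev P V → Ev (PCh P) V
  | .send p q m => .send (Sum.inl p) (Sum.inl q) m
  | .recv p q m => .recv (Sum.inl p) (Sum.inl q) m

def upd2 (f : P → P → ℕ) (p q : P) (v : ℕ) : P → P → ℕ :=
  fun a b => if a = p ∧ b = q then v else f a b

/-- Encode a single event, given channel bounds `B` and the numbers `σ p q`
(resp. `ρ p q`) of earlier sends (resp. receives) on each channel: on a channel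
in the domain of `B`, the `k`-th send (receive) becomes the paired event through
channel participant `⟨p,q,k mod B(p,q)⟩`; other events are unchanged. -/
def encEv (B : P → P → Option ℕ) (σ ρ : P → P → ℕ) : Ev P V → List (Ev (PCh P) V)
  | .send p q m =>
      match B p q with
      | some b => [Ev.send (Sum.inl p) (Sum.inr (p, q, σ p q % b)) m,
                   Ev.recv (Sum.inl p) (Sum.inr (p, q, σ p q % b)) m]
      | none => [Ev.send (Sum.inl p) (Sum.inl q) m]
  | .recv p q m =>
      match B p q with
      | some b => [Ev.send (Sum.inr (p, q, ρ p q % b)) (Sum.inl q) m,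
                   Ev.recv (Sum.inr (p, q, ρ p q % b)) (Sum.inl q) m]
      | none => [Ev.recv (Sum.inl p) (Sum.inl q) m]

def bumpS (B : P → P → Option ℕ) (σ : P → P → ℕ) : Ev P V → (P → P → ℕ)
  | .send p q _ => if (B p q).isSome then upd2 σ p q (σ p q + 1) else σ
  | .recv _ _ _ => σ

def bumpR (B : P → P → Option ℕ) (ρ : P → P → ℕ) : Ev P V → (P → P → ℕ)
  | .recv p q _ => if (B p q).isSome then upd2 ρ p q (ρ p q + 1) else ρ
  | .send _ _ _ => ρ

/-- Encoding of finite words, threading the per-channel counters. -/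
def encList (B : P → P → Option ℕ) :
    (P → P → ℕ) → (P → P → ℕ) → List (Ev P V) → List (Ev (PCh P) V)
  | _, _, [] => []
  | σ, ρ, e :: w => encEv B σ ρ e ++ encList B (bumpS B σ e) (bumpR B ρ e) w

/-- The word encoding `enc(w)` (for an infinite word, the `n`-th letter of the
encoding is determined by the encoding of a sufficiently long finite prefix). -/
def encWord (B : P → P → Option ℕ) : Word (Ev P V) → Word (Ev (PCh P) V)
  | .inl u => .inl (encList B (fun _ _ => 0) (fun _ _ => 0) u)
  | .inr f => .inr fun n =>
      (encList B (fun _ _ => 0) (fun _ _ => 0) ((List.range (n+1)).map f)).getD n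
        (embedEv (f 0))

/-- A word respects the channel bounds `B`: on every channel in the domain of
`B`, its projection to that channel is `B(p,q)`-bounded. -/
def RespectsBw (B : P → P → Option ℕ) (w : Word (Ev P V)) : Prop :=
  ∀ p q b, B p q = some b →
    ∀ n : ℕ, (sendMsgs p q (Word.take w n)).length ≤ (recvMsgs p q (Word.take w n)).length + b

end Enc

/-- Projection of a word to the letters satisfying `X` (for an infinite word the
result may be finite or infinite). -/
noncomputable def WProj {E : Type w} (X : E → Prop) : Word E → Word E
  | .inl u => .inl (u.filter fun e => @decide (X e) (Classical.propDecidable _))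
  | .inr f =>
      haveI : Decidable ({n | X (f n)}.Infinite) := Classical.propDecidable _
      if h : {n | X (f n)}.Infinite then .inr fun k => f (Nat.nth (fun n => X (f n)) k)
      else .inl (((Set.not_infinite.mp h).toFinset.sort (· ≤ ·)).map f)

section ProofAux
variable {P : Type} {V : Type} [DecidableEq P] [DecidableEq V]

def rEv (p q : P) (i : ℕ) (m : V) : Ev (PCh P) V := Ev.recv (Sum.inl p) (Sum.inr (p,q,i)) m
def sEv (p q : P) (i : ℕ) (m : V) : Ev (PCh P) V := Ev.send (Sum.inr (p,q,i)) (Sum.inl q) m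

def alt2 (p q : P) (i : ℕ) : List V → List V → List (Ev (PCh P) V)
  | [], _ => []
  | m :: _, [] => [rEv p q i m]
  | m :: l, m2 :: l2 => rEv p q i m :: sEv p q i m2 :: alt2 p q i l l2

lemma alt2_nil (p q : P) (i : ℕ) (l2 : List V) : alt2 p q i [] l2 = [] := by
  cases l2 <;> rfl

lemma alt2_snoc_left (p q : P) (i : ℕ) (m : V) :
    ∀ (l l2 : List V), l.length = l2.length →
      alt2 p q i (l ++ [m]) l2 = alt2 p q i l l2 ++ [rEv p q i m]
  | [], [], _ => by simp [alt2, alt2_nil]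
  | [], _ :: _, h => by simp at h
  | _ :: _, [], h => by simp at h
  | a :: l, c :: l2, h => by
    simp only [List.cons_append, alt2, List.length_cons] at *
    rw [alt2_snoc_left p q i m l l2 (by omega)]

lemma alt2_snoc_right (p q : P) (i : ℕ) (m : V) :
    ∀ (l l2 : List V), l.length = l2.length + 1 →
      alt2 p q i l (l2 ++ [m]) = alt2 p q i l l2 ++ [sEv p q i m]
  | [], _, h => by simp at h
  | [a], [], _ => by simp [alt2, alt2_nil]
  | a :: a2 :: l, [], h => by simp at h
  | a :: l, c :: l2, h => by
    simp only [List.cons_append, alt2, List.length_cons] at *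
    rw [alt2_snoc_right p q i m l l2 (by omega)]

lemma alt2_prefix (p q : P) (i : ℕ) :
    ∀ (l l' l2 l2' : List V), l <+: l' → l2 <+: l2' →
      alt2 p q i l l2 <+: alt2 p q i l' l2'
  | [], l', l2, l2', _, _ => by simp [alt2_nil]
  | a :: l, [], l2, l2', h, _ => by
      exact absurd (List.eq_nil_of_prefix_nil h) (by simp)
  | a :: l, a' :: l', [], [], h, h2 => by
      obtain ⟨rfl, hl⟩ : a = a' ∧ l <+: l' := by
        simpa [List.cons_prefix_cons] using h
      simp [alt2]
  | a :: l, a' :: l', [], c' :: l2', h, h2 => by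
      obtain ⟨rfl, hl⟩ : a = a' ∧ l <+: l' := by
        simpa [List.cons_prefix_cons] using h
      simp only [alt2]
      exact ⟨sEv p q i c' :: alt2 p q i l' l2', rfl⟩
  | a :: l, a' :: l', c :: l2, [], h, h2 => by
      exact absurd (List.eq_nil_of_prefix_nil h2) (by simp)
  | a :: l, a' :: l', c :: l2, c' :: l2', h, h2 => by
      obtain ⟨rfl, hl⟩ : a = a' ∧ l <+: l' := by
        simpa [List.cons_prefix_cons] using h
      obtain ⟨rfl, hl2⟩ : c = c' ∧ l2 <+: l2' := by
        simpa [List.cons_prefix_cons] using h2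
      simp only [alt2]
      obtain ⟨t, ht⟩ := alt2_prefix p q i l l' l2 l2' hl hl2
      exact ⟨t, by simp [ht]⟩

/-- selection of entries at positions ≡ i (mod b), starting position k -/
def selS (b i : ℕ) : ℕ → List V → List V
  | _, [] => []
  | k, m :: S => (if k % b = i then [m] else []) ++ selS b i (k+1) S

lemma selS_append (b i : ℕ) :
    ∀ (S T : List V) (k : ℕ), selS b i k (S ++ T) = selS b i k S ++ selS b i (k + S.length) T
  | [], T, k => by simp [selS]
  | m :: S, T, k => by
    simp only [List.cons_append, selS, List.length_cons,
      show (S.append T) = S ++ T from rfl, selS_append b i S T (k+1)]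
    rw [List.append_assoc, show k + 1 + S.length = k + (S.length + 1) from by omega]

lemma selS_prefix (b i : ℕ) {S T : List V} (h : S <+: T) :
    selS b i 0 S <+: selS b i 0 T := by
  obtain ⟨t, rfl⟩ := h
  rw [selS_append]
  exact List.prefix_append _ _

def cnt (b i n : ℕ) : ℕ := Nat.count (fun k => k % b = i) n

lemma cnt_succ (b i n : ℕ) : cnt b i (n+1) = cnt b i n + if n % b = i then 1 else 0 :=
  Nat.count_succ _ n

lemma selS_length (b i : ℕ) :
    ∀ (S : List V) (k : ℕ), (selS b i k S).length + cnt b i k = cnt b i (k + S.length)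
  | [], k => by simp [selS]
  | m :: S, k => by
    have h2 := selS_length b i S (k+1)
    have e : k + (S.length + 1) = (k+1) + S.length := by omega
    simp only [selS, List.length_append, List.length_cons, cnt_succ, e] at *
    by_cases h : k % b = i <;> simp [h] at * <;> omega

lemma selS_length0 (b i : ℕ) (S : List V) : (selS b i 0 S).length = cnt b i S.length := by
  have := selS_length b i S 0
  simpa [cnt, Nat.count_zero] using this

lemma cnt_no_hits (b i : ℕ) {R L : ℕ} (h : R ≤ L)
    (hn : ∀ k, R ≤ k → k < L → ¬ (k % b = i)) : cnt b i L = cnt b i R := by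
  induction L with
  | zero => have : R = 0 := by omega
            rw [this]
  | succ L ih =>
    rcases Nat.lt_or_ge R (L+1) with hlt | hge
    · have hR : R ≤ L := by omega
      rw [cnt_succ, if_neg (hn L hR (by omega)), ih hR (fun k hk1 hk2 => hn k hk1 (by omega))]
      rfl
    · have : R = L + 1 := by omega
      rw [this]

lemma cnt_eq_send (b i : ℕ) {R L : ℕ} (hL : L % b = i) (hRL : R ≤ L) (hb : L + 1 ≤ R + b) :
    cnt b i L = cnt b i R := by
  apply cnt_no_hits b i hRL
  intro k hk1 hk2 hki
  have hmod : k ≡ L [MOD b] := by unfold Nat.ModEq; rw [hki, hL]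
  have hdvd : b ∣ L - k := (Nat.modEq_iff_dvd' (by omega)).mp hmod
  have := Nat.eq_zero_of_dvd_of_lt hdvd (by omega)
  omega

lemma cnt_eq_recv (b i : ℕ) {R L : ℕ} (hR : R % b = i) (hRL : R < L) (hb : L ≤ R + b) :
    cnt b i L = cnt b i R + 1 := by
  have h1 : cnt b i L = cnt b i (R+1) := by
    apply cnt_no_hits b i (by omega)
    intro k hk1 hk2 hki
    have hmod : R ≡ k [MOD b] := by unfold Nat.ModEq; rw [hki, hR]
    have hdvd : b ∣ k - R := (Nat.modEq_iff_dvd' (by omega)).mp hmod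
    have := Nat.eq_zero_of_dvd_of_lt hdvd (by omega)
    omega
  rw [h1, cnt_succ, if_pos hR]


lemma sendMsgs_append (p q : P) (l t : List (Ev P V)) :
    sendMsgs p q (l ++ t) = sendMsgs p q l ++ sendMsgs p q t :=
  List.filterMap_append

lemma recvMsgs_append (p q : P) (l t : List (Ev P V)) :
    recvMsgs p q (l ++ t) = recvMsgs p q l ++ recvMsgs p q t :=
  List.filterMap_append

lemma filterMap_swap2 {α β : Type} (φ : α → Option β) (a b : α)
    (h : φ a = none ∨ φ b = none) (l u : List α) :
    List.filterMap φ (l ++ a :: b :: u) = List.filterMap φ (l ++ b :: a :: u) := by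
  rcases h with h | h <;> simp [List.filterMap_cons, h]

lemma Swap_sendMsgs_eq {w u : List (Ev P V)} (h : Swap w u) (p q : P) :
    sendMsgs p q w = sendMsgs p q u := by
  unfold sendMsgs
  cases h with
  | ss w u p1 q1 p2 q2 m m' hne =>
      apply filterMap_swap2
      by_cases h1 : p1 = p ∧ q1 = q
      · right; simp only
        rw [if_neg]
        rintro ⟨h2, h3⟩
        exact hne (h1.1.trans h2.symm)
      · left; simp only
        rw [if_neg h1]
  | rr w u p1 q1 p2 q2 m m' hne => exact filterMap_swap2 _ _ _ (Or.inl rfl) _ _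
  | sr w u p1 q1 p2 q2 m m' h1 h2 => exact filterMap_swap2 _ _ _ (Or.inr rfl) _ _
  | srSame w u p1 q1 m m' hlt => exact filterMap_swap2 _ _ _ (Or.inr rfl) _ _

lemma Swap_recvMsgs_eq {w u : List (Ev P V)} (h : Swap w u) (p q : P) :
    recvMsgs p q w = recvMsgs p q u := by
  unfold recvMsgs
  cases h with
  | ss w u p1 q1 p2 q2 m m' hne => exact filterMap_swap2 _ _ _ (Or.inl rfl) _ _
  | rr w u p1 q1 p2 q2 m m' hne =>
      apply filterMap_swap2
      by_cases h1 : p1 = p ∧ q1 = q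
      · right; simp only
        rw [if_neg]
        rintro ⟨h2, h3⟩
        exact hne (h1.2.trans h3.symm)
      · left; simp only
        rw [if_neg h1]
  | sr w u p1 q1 p2 q2 m m' h1 h2 => exact filterMap_swap2 _ _ _ (Or.inl rfl) _ _
  | srSame w u p1 q1 m m' hlt => exact filterMap_swap2 _ _ _ (Or.inl rfl) _ _

lemma Indist_sendMsgs_eq {w u : List (Ev P V)} (h : Indist w u) (p q : P) :
    sendMsgs p q w = sendMsgs p q u := by
  induction h with
  | of hs => exact Swap_sendMsgs_eq hs p q
  | refl w => rfl
  | symm _ ih => exact ih.symm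
  | trans _ _ ih1 ih2 => exact ih1.trans ih2

lemma Indist_recvMsgs_eq {w u : List (Ev P V)} (h : Indist w u) (p q : P) :
    recvMsgs p q w = recvMsgs p q u := by
  induction h with
  | of hs => exact Swap_recvMsgs_eq hs p q
  | refl w => rfl
  | symm _ ih => exact ih.symm
  | trans _ _ ih1 ih2 => exact ih1.trans ih2

lemma encList_append (B : P → P → Option ℕ) :
    ∀ (xs ys : List (Ev P V)) (σ ρ : P → P → ℕ),
      encList B σ ρ (xs ++ ys) =
        encList B σ ρ xs ++ encList B (xs.foldl (bumpS B) σ) (xs.foldl (bumpR B) ρ) ys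
  | [], ys, σ, ρ => by simp [encList]
  | e :: xs, ys, σ, ρ => by
      simp only [List.cons_append, encList, List.foldl_cons, List.append_eq,
        encList_append B xs ys (bumpS B σ e) (bumpR B ρ e), List.append_assoc]

lemma foldl_bumpS_apply (B : P → P → Option ℕ) (p q : P) (hB : (B p q).isSome) :
    ∀ (xs : List (Ev P V)) (σ : P → P → ℕ),
      (xs.foldl (bumpS B) σ) p q = σ p q + (sendMsgs p q xs).length
  | [], σ => by simp [sendMsgs]
  | e :: xs, σ => by
    rw [List.foldl_cons, foldl_bumpS_apply B p q hB xs]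
    cases e with
    | send p2 q2 m =>
      by_cases h : p2 = p ∧ q2 = q
      · obtain ⟨rfl, rfl⟩ := h
        simp [bumpS, hB, upd2, sendMsgs, List.filterMap_cons]
        omega
      · have h' : ¬ (p = p2 ∧ q = q2) := fun hc => h ⟨hc.1.symm, hc.2.symm⟩
        have hms : sendMsgs p q (Ev.send p2 q2 m :: xs) = sendMsgs p q xs := by
          simp only [sendMsgs, List.filterMap_cons, if_neg h]
        rw [hms]
        cases hs : (B p2 q2).isSome <;> simp [bumpS, hs, upd2, if_neg h']
    | recv p2 q2 m =>
      have hms : sendMsgs p q (Ev.recv p2 q2 m :: xs) = sendMsgs p q xs := by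
        simp only [sendMsgs, List.filterMap_cons]
      rw [hms]
      rfl

lemma foldl_bumpR_apply (B : P → P → Option ℕ) (p q : P) (hB : (B p q).isSome) :
    ∀ (xs : List (Ev P V)) (ρ : P → P → ℕ),
      (xs.foldl (bumpR B) ρ) p q = ρ p q + (recvMsgs p q xs).length
  | [], ρ => by simp [recvMsgs]
  | e :: xs, ρ => by
    rw [List.foldl_cons, foldl_bumpR_apply B p q hB xs]
    cases e with
    | recv p2 q2 m =>
      by_cases h : p2 = p ∧ q2 = q
      · obtain ⟨rfl, rfl⟩ := h
        simp [bumpR, hB, upd2, recvMsgs, List.filterMap_cons]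
        omega
      · have h' : ¬ (p = p2 ∧ q = q2) := fun hc => h ⟨hc.1.symm, hc.2.symm⟩
        have hms : recvMsgs p q (Ev.recv p2 q2 m :: xs) = recvMsgs p q xs := by
          simp only [recvMsgs, List.filterMap_cons, if_neg h]
        rw [hms]
        cases hs : (B p2 q2).isSome <;> simp [bumpR, hs, upd2, if_neg h']
    | send p2 q2 m =>
      have hms : recvMsgs p q (Ev.send p2 q2 m :: xs) = recvMsgs p q xs := by
        simp only [recvMsgs, List.filterMap_cons]
      rw [hms]
      rfl

noncomputable def pdec (A : PCh P) : Ev (PCh P) V → Bool :=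
  fun e => @decide (Ev.Active A e) (Classical.propDecidable _)

lemma pdec_true {A : PCh P} {e : Ev (PCh P) V} (h : Ev.Active A e) : pdec A e = true :=
  @decide_eq_true _ (Classical.propDecidable _) h

lemma pdec_false {A : PCh P} {e : Ev (PCh P) V} (h : ¬ Ev.Active A e) : pdec A e = false :=
  @decide_eq_false _ (Classical.propDecidable _) h

lemma active_send (A : PCh P) (x y : PCh P) (m : V) :
    Ev.Active A (Ev.send x y m) = (x = A) := rfl

lemma active_recv (A : PCh P) (x y : PCh P) (m : V) :
    Ev.Active A (Ev.recv x y m) = (y = A) := rfl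

lemma take_full_eq {α : Type} (l : List α) {n : ℕ} (h : l.length ≤ n) : l.take n = l :=
  List.take_of_length_le h

lemma main1 (B : P → P → Option ℕ) (p q : P) (b i : ℕ) (hB : B p q = some b)
    (v : List (Ev P V))
    (H1 : ∀ n, recvMsgs p q (v.take n) <+: sendMsgs p q (v.take n))
    (H2 : ∀ n, (sendMsgs p q (v.take n)).length ≤ (recvMsgs p q (v.take n)).length + b) :
    (encList B (fun _ _ => 0) (fun _ _ => 0) v).filter (pdec (Sum.inr (p,q,i)))
      = alt2 p q i (selS b i 0 (sendMsgs p q v)) (selS b i 0 (recvMsgs p q v)) := by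
  induction v using List.reverseRecOn with
  | nil => simp [encList, sendMsgs, recvMsgs, selS, alt2_nil]
  | append_singleton v' e IH =>
    have hSome : (B p q).isSome := by rw [hB]; rfl
    have hH1' : ∀ n, recvMsgs p q (v'.take n) <+: sendMsgs p q (v'.take n) := by
      intro n
      rcases le_or_gt n v'.length with hn | hn
      · have := H1 n
        rwa [List.take_append_of_le_length hn] at this
      · have := H1 v'.length
        rw [List.take_append_of_le_length (le_refl _), take_full_eq v' (le_refl _)] at this
        rwa [take_full_eq v' (by omega)]
    have hH2' : ∀ n, (sendMsgs p q (v'.take n)).length ≤ (recvMsgs p q (v'.take n)).length + b := by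
      intro n
      rcases le_or_gt n v'.length with hn | hn
      · have := H2 n
        rwa [List.take_append_of_le_length hn] at this
      · have := H2 v'.length
        rw [List.take_append_of_le_length (le_refl _), take_full_eq v' (le_refl _)] at this
        rwa [take_full_eq v' (by omega)]
    have H1full : recvMsgs p q (v' ++ [e]) <+: sendMsgs p q (v' ++ [e]) := by
      have := H1 (v' ++ [e]).length
      rwa [take_full_eq _ (le_refl _)] at this
    have H2full : (sendMsgs p q (v' ++ [e])).length ≤ (recvMsgs p q (v' ++ [e])).length + b := by
      have := H2 (v' ++ [e]).length
      rwa [take_full_eq _ (le_refl _)] at this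
    have H1p : recvMsgs p q v' <+: sendMsgs p q v' := by
      have := hH1' v'.length
      rwa [take_full_eq v' (le_refl _)] at this
    have H2p : (sendMsgs p q v').length ≤ (recvMsgs p q v').length + b := by
      have := hH2' v'.length
      rwa [take_full_eq v' (le_refl _)] at this
    have hσ : (v'.foldl (bumpS B) (fun _ _ => 0)) p q = (sendMsgs p q v').length := by
      rw [foldl_bumpS_apply B p q hSome]
      omega
    have hρ : (v'.foldl (bumpR B) (fun _ _ => 0)) p q = (recvMsgs p q v').length := by
      rw [foldl_bumpR_apply B p q hSome]
      omega
    rw [encList_append, List.filter_append, IH hH1' hH2']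
    set s := (sendMsgs p q v').length with hs_def
    set r := (recvMsgs p q v').length with hr_def
    cases e with
    | send p2 q2 m =>
      have hRM : recvMsgs p q (v' ++ [Ev.send p2 q2 m]) = recvMsgs p q v' := by
        rw [recvMsgs_append]; simp [recvMsgs]
      by_cases hpq : p2 = p ∧ q2 = q
      · rw [hpq.1, hpq.2] at hRM H1full H2full ⊢
        have hSM : sendMsgs p q (v' ++ [Ev.send p q m]) = sendMsgs p q v' ++ [m] := by
          rw [sendMsgs_append]; simp [sendMsgs]
        have henc : encList B (v'.foldl (bumpS B) (fun _ _ => 0)) (v'.foldl (bumpR B) (fun _ _ => 0)) [Ev.send p q m]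
            = [Ev.send (Sum.inl p) (Sum.inr (p, q, s % b)) m,
               Ev.recv (Sum.inl p) (Sum.inr (p, q, s % b)) m] := by
          simp [encList, encEv, hB, hσ]
        rw [henc, hSM, hRM, selS_append]
        have h1 : pdec (Sum.inr (p,q,i) : PCh P) (Ev.send (Sum.inl p) (Sum.inr (p, q, s % b)) m) = false :=
          pdec_false (by rw [active_send]; simp)
        by_cases hsi : s % b = i
        · have h2 : pdec (Sum.inr (p,q,i) : PCh P) (Ev.recv (Sum.inl p) (Sum.inr (p, q, s % b)) m) = true :=
            pdec_true (by rw [active_recv, hsi])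
          have hsel : selS b i (0 + (sendMsgs p q v').length) [m] = [m] := by
            simp [selS, show (sendMsgs p q v').length % b = i from hsi]
          rw [hsel]
          have hlen : (selS b i 0 (sendMsgs p q v')).length = (selS b i 0 (recvMsgs p q v')).length := by
            rw [selS_length0, selS_length0]
            apply cnt_eq_send b i hsi (H1p.length_le)
            rw [hSM, hRM] at H2full
            simpa using H2full
          rw [alt2_snoc_left p q i m _ _ hlen, hsi] at *
          have h1' : pdec (Sum.inr (p,q,i) : PCh P) (Ev.send (Sum.inl p) (Sum.inr (p, q, i)) m) = false :=
            pdec_false (by rw [active_send]; simp)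
          simp [List.filter, h1', h2, rEv]
        · have h2 : pdec (Sum.inr (p,q,i) : PCh P) (Ev.recv (Sum.inl p) (Sum.inr (p, q, s % b)) m) = false :=
            pdec_false (by rw [active_recv]; simp [hsi])
          have hsel : selS b i (0 + (sendMsgs p q v').length) [m] = [] := by
            simp [selS, show ¬ (sendMsgs p q v').length % b = i from hsi]
          rw [hsel]
          simp [List.filter, h1, h2]
      · have hSM : sendMsgs p q (v' ++ [Ev.send p2 q2 m]) = sendMsgs p q v' := by
          rw [sendMsgs_append]
          have : sendMsgs p q [Ev.send p2 q2 m] = [] := by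
            simp [sendMsgs, hpq]
          rw [this, List.append_nil]
        rw [hSM, hRM]
        have hfil : (encList B (v'.foldl (bumpS B) (fun _ _ => 0)) (v'.foldl (bumpR B) (fun _ _ => 0))
            [Ev.send p2 q2 m]).filter (pdec (Sum.inr (p,q,i))) = [] := by
          rcases hb2 : B p2 q2 with _ | b2
          · have h1 : pdec (Sum.inr (p,q,i) : PCh P) (Ev.send (Sum.inl p2) (Sum.inl q2) m) = false :=
              pdec_false (by rw [active_send]; simp)
            simp [encList, encEv, hb2, List.filter, h1]
          · have h1 : ∀ j, pdec (Sum.inr (p,q,i) : PCh P) (Ev.send (Sum.inl p2) (Sum.inr (p2, q2, j)) m) = false :=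
              fun j => pdec_false (by rw [active_send]; simp)
            have h2 : ∀ j, pdec (Sum.inr (p,q,i) : PCh P) (Ev.recv (Sum.inl p2) (Sum.inr (p2, q2, j)) m) = false := by
              intro j
              apply pdec_false
              rw [active_recv]
              intro hc
              simp only [Sum.inr.injEq, Prod.mk.injEq] at hc
              exact hpq ⟨hc.1, hc.2.1⟩
            simp [encList, encEv, hb2, List.filter, h1, h2]
        rw [hfil, List.append_nil]
    | recv p2 q2 m =>
      have hSM : sendMsgs p q (v' ++ [Ev.recv p2 q2 m]) = sendMsgs p q v' := by
        rw [sendMsgs_append]; simp [sendMsgs]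
      by_cases hpq : p2 = p ∧ q2 = q
      · rw [hpq.1, hpq.2] at hSM H1full H2full ⊢
        have hRM : recvMsgs p q (v' ++ [Ev.recv p q m]) = recvMsgs p q v' ++ [m] := by
          rw [recvMsgs_append]; simp [recvMsgs]
        have henc : encList B (v'.foldl (bumpS B) (fun _ _ => 0)) (v'.foldl (bumpR B) (fun _ _ => 0)) [Ev.recv p q m]
            = [Ev.send (Sum.inr (p, q, r % b)) (Sum.inl q) m,
               Ev.recv (Sum.inr (p, q, r % b)) (Sum.inl q) m] := by
          simp [encList, encEv, hB, hρ]
        rw [henc, hSM, hRM, selS_append]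
        have h2 : pdec (Sum.inr (p,q,i) : PCh P) (Ev.recv (Sum.inr (p, q, r % b)) (Sum.inl q) m) = false :=
          pdec_false (by rw [active_recv]; simp)
        have hrs : r < s := by
          have := H1full.length_le
          rw [hSM, hRM] at this
          simp at this
          omega
        by_cases hri : r % b = i
        · have h1 : pdec (Sum.inr (p,q,i) : PCh P) (Ev.send (Sum.inr (p, q, r % b)) (Sum.inl q) m) = true :=
            pdec_true (by rw [active_send, hri])
          have hsel : selS b i (0 + (recvMsgs p q v').length) [m] = [m] := by
            simp [selS, show (recvMsgs p q v').length % b = i from hri]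
          rw [hsel]
          have hlen : (selS b i 0 (sendMsgs p q v')).length = (selS b i 0 (recvMsgs p q v')).length + 1 := by
            rw [selS_length0, selS_length0]
            exact cnt_eq_recv b i hri hrs H2p
          rw [alt2_snoc_right p q i m _ _ hlen, hri] at *
          have h2' : pdec (Sum.inr (p,q,i) : PCh P) (Ev.recv (Sum.inr (p, q, i)) (Sum.inl q) m) = false :=
            pdec_false (by rw [active_recv]; simp)
          simp [List.filter, h1, h2', sEv]
        · have h1 : pdec (Sum.inr (p,q,i) : PCh P) (Ev.send (Sum.inr (p, q, r % b)) (Sum.inl q) m) = false :=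
            pdec_false (by rw [active_send]; simp [hri])
          have hsel : selS b i (0 + (recvMsgs p q v').length) [m] = [] := by
            simp [selS, show ¬ (recvMsgs p q v').length % b = i from hri]
          rw [hsel]
          simp [List.filter, h1, h2]
      · have hRM : recvMsgs p q (v' ++ [Ev.recv p2 q2 m]) = recvMsgs p q v' := by
          rw [recvMsgs_append]
          have : recvMsgs p q [Ev.recv p2 q2 m] = [] := by
            simp [recvMsgs, hpq]
          rw [this, List.append_nil]
        rw [hSM, hRM]
        have hfil : (encList B (v'.foldl (bumpS B) (fun _ _ => 0)) (v'.foldl (bumpR B) (fun _ _ => 0))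
            [Ev.recv p2 q2 m]).filter (pdec (Sum.inr (p,q,i))) = [] := by
          rcases hb2 : B p2 q2 with _ | b2
          · have h1 : pdec (Sum.inr (p,q,i) : PCh P) (Ev.recv (Sum.inl p2) (Sum.inl q2) m) = false :=
              pdec_false (by rw [active_recv]; simp)
            simp [encList, encEv, hb2, List.filter, h1]
          · have h1 : ∀ j, pdec (Sum.inr (p,q,i) : PCh P) (Ev.send (Sum.inr (p2, q2, j)) (Sum.inl q2) m) = false := by
              intro j
              apply pdec_false
              rw [active_send]
              intro hc
              simp only [Sum.inr.injEq, Prod.mk.injEq] at hc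
              exact hpq ⟨hc.1, hc.2.1⟩
            have h2 : ∀ j, pdec (Sum.inr (p,q,i) : PCh P) (Ev.recv (Sum.inr (p2, q2, j)) (Sum.inl q2) m) = false :=
              fun j => pdec_false (by rw [active_recv]; simp)
            simp [encList, encEv, hb2, List.filter, h1, h2]
        rw [hfil, List.append_nil]

/-! ### Infinite-word machinery -/

def preW (h : ℕ → Ev P V) (n : ℕ) : List (Ev P V) := (List.range n).map h

def EL (B : P → P → Option ℕ) (h : ℕ → Ev P V) (n : ℕ) : List (Ev (PCh P) V) :=
  encList B (fun _ _ => 0) (fun _ _ => 0) (preW h n)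

noncomputable def FF (B : P → P → Option ℕ) (h : ℕ → Ev P V) : ℕ → Ev (PCh P) V :=
  fun n => (EL B h (n+1)).getD n (embedEv (h 0))

noncomputable def CC (B : P → P → Option ℕ) (A : PCh P) (h : ℕ → Ev P V) (n : ℕ) :
    List (Ev (PCh P) V) := (EL B h n).filter (pdec A)

lemma encWord_inr (B : P → P → Option ℕ) (h : ℕ → Ev P V) :
    encWord B (Sum.inr h) = Sum.inr (FF B h) := rfl

lemma preW_prefix (h : ℕ → Ev P V) {n m : ℕ} (hnm : n ≤ m) : preW h n <+: preW h m := by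
  have : preW h n = (preW h m).take n := by
    simp [preW, ← List.map_take, List.take_range, Nat.min_eq_left hnm]
  rw [this]
  exact List.take_prefix _ _

lemma preW_take (h : ℕ → Ev P V) (n k : ℕ) : (preW h n).take k = preW h (min k n) := by
  simp [preW, ← List.map_take, List.take_range]

lemma EL_mono (B : P → P → Option ℕ) (h : ℕ → Ev P V) {n m : ℕ} (hnm : n ≤ m) :
    EL B h n <+: EL B h m := by
  obtain ⟨t, ht⟩ := preW_prefix h hnm
  show encList B (fun _ _ => 0) (fun _ _ => 0) (preW h n) <+:
    encList B (fun _ _ => 0) (fun _ _ => 0) (preW h m)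
  rw [← ht, encList_append]
  exact List.prefix_append _ _

lemma encList_length_ge (B : P → P → Option ℕ) :
    ∀ (v : List (Ev P V)) (σ ρ : P → P → ℕ), v.length ≤ (encList B σ ρ v).length
  | [], _, _ => by simp [encList]
  | e :: v, σ, ρ => by
    have h1 : 1 ≤ (encEv B σ ρ e).length := by
      cases e with
      | send p2 q2 m => rcases hb : B p2 q2 with _ | b2 <;> simp [encEv, hb]
      | recv p2 q2 m => rcases hb : B p2 q2 with _ | b2 <;> simp [encEv, hb]
    have h2 := encList_length_ge B v (bumpS B σ e) (bumpR B ρ e)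
    simp only [encList, List.length_append, List.length_cons]
    omega

lemma EL_length_ge (B : P → P → Option ℕ) (h : ℕ → Ev P V) (n : ℕ) : n ≤ (EL B h n).length := by
  have := encList_length_ge B (preW h n) (fun _ _ => 0) (fun _ _ => 0)
  simpa [preW, EL] using this

lemma FF_eq (B : P → P → Option ℕ) (h : ℕ → Ev P V) (n j : ℕ) (hj : j < (EL B h n).length) :
    FF B h j = (EL B h n)[j] := by
  have hj1 : j < (EL B h (j+1)).length := lt_of_lt_of_le (by omega) (EL_length_ge B h (j+1))
  have h1 : EL B h n <+: EL B h (max n (j+1)) := EL_mono B h (le_max_left _ _)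
  have h2 : EL B h (j+1) <+: EL B h (max n (j+1)) := EL_mono B h (le_max_right _ _)
  rw [FF, List.getD_eq_getElem _ _ hj1, h2.getElem hj1, ← h1.getElem hj]

lemma EL_eq_map (B : P → P → Option ℕ) (h : ℕ → Ev P V) (n : ℕ) :
    EL B h n = (List.range (EL B h n).length).map (FF B h) := by
  apply List.ext_getElem (by simp)
  intro j h1 h2
  simp only [List.getElem_map, List.getElem_range]
  exact (FF_eq B h n j h1).symm

noncomputable def rfL (Pr : ℕ → Prop) (N : ℕ) : List ℕ :=
  (List.range N).filter (fun j => @decide (Pr j) (Classical.propDecidable _))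

lemma CC_eq_map (B : P → P → Option ℕ) (A : PCh P) (h : ℕ → Ev P V) (n : ℕ) :
    CC B A h n = (rfL (fun j => Ev.Active A (FF B h j)) (EL B h n).length).map (FF B h) := by
  conv_lhs => rw [CC, EL_eq_map B h n]
  rw [List.filter_map]
  rfl

lemma rfL_mem (Pr : ℕ → Prop) (N j : ℕ) : j ∈ rfL Pr N ↔ Pr j ∧ j < N := by
  rw [rfL, List.mem_filter, List.mem_range]
  constructor
  · rintro ⟨h1, h2⟩
    exact ⟨@of_decide_eq_true _ (Classical.propDecidable _) h2, h1⟩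
  · rintro ⟨h1, h2⟩
    exact ⟨h2, @decide_eq_true _ (Classical.propDecidable _) h1⟩

lemma rfL_mono (Pr : ℕ → Prop) {N M : ℕ} (hnm : N ≤ M) : rfL Pr N <+: rfL Pr M := by
  apply List.IsPrefix.filter
  have : List.range N = (List.range M).take N := by rw [List.take_range, Nat.min_eq_left hnm]
  rw [this]
  exact List.take_prefix _ _

lemma rfL_pairwise (Pr : ℕ → Prop) (N : ℕ) : (rfL Pr N).Pairwise (· < ·) :=
  (List.pairwise_lt_range (n := N)).sublist List.filter_sublist

lemma rfL_length_eq_count (Pr : ℕ → Prop) [inst : DecidablePred Pr] (N : ℕ) :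
    (rfL Pr N).length = Nat.count Pr N := by
  rw [Nat.count, List.countP_eq_length_filter, rfL]
  congr 1
  apply List.filter_congr
  intro a _
  exact decide_eq_decide.mpr Iff.rfl

lemma rfL_getElem (Pr : ℕ → Prop) (N : ℕ) :
    ∀ (k : ℕ) (hk : k < (rfL Pr N).length), (rfL Pr N)[k] = Nat.nth Pr k := by
  letI : DecidablePred Pr := fun j => Classical.propDecidable _
  induction N with
  | zero => intro k hk; simp [rfL] at hk
  | succ N ih =>
    intro k hk
    have hsplit : rfL Pr (N+1) = rfL Pr N ++
        (List.filter (fun j => @decide (Pr j) (Classical.propDecidable _)) [N]) := by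
      rw [rfL, List.range_succ, List.filter_append]; rfl
    rcases lt_or_ge k (rfL Pr N).length with hlt | hge
    · rw [List.getElem_of_eq hsplit hk, List.getElem_append_left hlt]
      exact ih k hlt
    · by_cases hN : Pr N
      · have htail : List.filter (fun j => @decide (Pr j) (Classical.propDecidable _)) [N] = [N] := by
          simp [List.filter, @decide_eq_true _ (Classical.propDecidable _) hN]
        have hsplit2 : rfL Pr (N+1) = rfL Pr N ++ [N] := by rw [hsplit, htail]
        have hk' : k < (rfL Pr N).length + 1 := by
          have h5 := hk; rw [hsplit2] at h5; simpa using h5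
        have hkeq : k = (rfL Pr N).length := by omega
        rw [List.getElem_of_eq hsplit2 hk, List.getElem_append_right hge]
        have hcnt : (rfL Pr N).length = Nat.count Pr N := rfL_length_eq_count Pr N
        simp only [hkeq, Nat.sub_self, List.getElem_cons_zero]
        rw [hcnt]
        exact (Nat.nth_count hN).symm
      · have htail : List.filter (fun j => @decide (Pr j) (Classical.propDecidable _)) [N] = [] := by
          simp [List.filter, @decide_eq_false _ (Classical.propDecidable _) hN]
        have h5 := hk
        rw [hsplit, htail, List.append_nil] at h5
        omega

lemma count_unbounded_of_infinite (Pr : ℕ → Prop) [DecidablePred Pr]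
    (hinf : (setOf Pr).Infinite) (K : ℕ) : K ≤ Nat.count Pr (Nat.nth Pr K + 1) := by
  have h1 : Nat.count Pr (Nat.nth Pr K) = K := Nat.count_nth_of_infinite hinf K
  rw [Nat.count_succ, h1, if_pos (Nat.nth_mem_of_infinite hinf K)]
  omega

lemma sorted_lt_eq : ∀ (l l' : List ℕ), List.Pairwise (· < ·) l → List.Pairwise (· < ·) l' →
    (∀ x, x ∈ l ↔ x ∈ l') → l = l'
  | [], [], _, _, _ => rfl
  | [], a :: t, _, _, hm => absurd ((hm a).mpr (by simp)) (by simp)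
  | a :: t, [], _, _, hm => absurd ((hm a).mp (by simp)) (by simp)
  | a :: t, a' :: t', hp, hp', hm => by
    have haa : a = a' := by
      have h1 : a ∈ a' :: t' := (hm a).mp (by simp)
      have h2 : a' ∈ a :: t := (hm a').mpr (by simp)
      simp only [List.mem_cons] at h1 h2
      rcases h1 with h1 | h1
      · exact h1
      · rcases h2 with h2 | h2
        · exact h2.symm
        · have hx := List.rel_of_pairwise_cons hp' h1
          have hy := List.rel_of_pairwise_cons hp h2
          omega
    subst haa
    have ht : t = t' := by
      apply sorted_lt_eq t t' hp.of_cons hp'.of_cons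
      intro x
      constructor
      · intro hx
        have hax := List.rel_of_pairwise_cons hp hx
        have hmem := (hm x).mp (by simp [hx])
        simp only [List.mem_cons] at hmem
        rcases hmem with hh | hh
        · omega
        · exact hh
      · intro hx
        have hax := List.rel_of_pairwise_cons hp' hx
        have hmem := (hm x).mpr (by simp [hx])
        simp only [List.mem_cons] at hmem
        rcases hmem with hh | hh
        · omega
        · exact hh
    rw [ht]

lemma infinite_iff (B : P → P → Option ℕ) (A : PCh P) (h : ℕ → Ev P V) :
    {j | Ev.Active A (FF B h j)}.Infinite ↔ ∀ K, ∃ n, K ≤ (CC B A h n).length := by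
  letI : DecidablePred (fun j => Ev.Active A (FF B h j)) := fun j => Classical.propDecidable _
  have hlen : ∀ n, (CC B A h n).length
      = Nat.count (fun j => Ev.Active A (FF B h j)) (EL B h n).length := by
    intro n
    rw [CC_eq_map, List.length_map, rfL_length_eq_count]
  constructor
  · intro hinf K
    refine ⟨Nat.nth (fun j => Ev.Active A (FF B h j)) K + 1, ?_⟩
    rw [hlen]
    have h2 := count_unbounded_of_infinite (fun j => Ev.Active A (FF B h j)) hinf K
    have h3 := Nat.count_monotone (fun j => Ev.Active A (FF B h j))
      (EL_length_ge B h (Nat.nth (fun j => Ev.Active A (FF B h j)) K + 1))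
    omega
  · intro hK
    by_contra hfin
    rw [Set.not_infinite] at hfin
    obtain ⟨n, hn⟩ := hK (hfin.toFinset.card + 1)
    rw [hlen] at hn
    have := Nat.count_le_card hfin (EL B h n).length
    omega

lemma FF_nth_eq (B : P → P → Option ℕ) (A : PCh P) (h : ℕ → Ev P V) (k n : ℕ)
    (hk : k < (CC B A h n).length) :
    FF B h (Nat.nth (fun j => Ev.Active A (FF B h j)) k) = (CC B A h n)[k] := by
  have hrf : k < (rfL (fun j => Ev.Active A (FF B h j)) (EL B h n).length).length := by
    have h6 := CC_eq_map B A h n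
    rw [h6, List.length_map] at hk
    exact hk
  rw [List.getElem_of_eq (CC_eq_map B A h n) hk, List.getElem_map, rfL_getElem _ _ k hrf]

lemma finite_branch (B : P → P → Option ℕ) (A : PCh P) (h : ℕ → Ev P V)
    (hf : {j | Ev.Active A (FF B h j)}.Finite) :
    ∃ n₀, (∀ m, CC B A h m <+: CC B A h n₀) ∧
      ((hf.toFinset.sort (· ≤ ·)).map (FF B h) = CC B A h n₀) := by
  obtain ⟨ub, hub⟩ := hf.bddAbove
  set Pr := fun j => Ev.Active A (FF B h j) with hPr
  have hbound : ∀ j, Pr j → j ≤ ub := fun j hj => hub hj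
  set n₀ := ub + 1 with hn₀
  have hN₀ : ub + 1 ≤ (EL B h n₀).length := EL_length_ge B h n₀
  have hstable : ∀ N, (EL B h n₀).length ≤ N → rfL Pr N = rfL Pr (EL B h n₀).length := by
    intro N hN
    obtain ⟨d, rfl⟩ : ∃ d, N = (EL B h n₀).length + d := ⟨N - (EL B h n₀).length, by omega⟩
    have hsplit : rfL Pr ((EL B h n₀).length + d) = rfL Pr (EL B h n₀).length ++
        ((List.range d).map (fun x => (EL B h n₀).length + x)).filter
          (fun j => @decide (Pr j) (Classical.propDecidable _)) := by
      rw [rfL, List.range_add, List.filter_append]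
      rfl
    rw [hsplit]
    have hnil : ((List.range d).map (fun x => (EL B h n₀).length + x)).filter
        (fun j => @decide (Pr j) (Classical.propDecidable _)) = [] := by
      rw [List.filter_eq_nil_iff]
      intro a ha
      simp only [List.mem_map, List.mem_range] at ha
      obtain ⟨x, _, rfl⟩ := ha
      intro hdec
      have hP : Pr ((EL B h n₀).length + x) := @of_decide_eq_true _ (Classical.propDecidable _) hdec
      have := hbound _ hP
      omega
    rw [hnil, List.append_nil]
  refine ⟨n₀, ?_, ?_⟩
  · intro m
    rw [CC_eq_map B A h m, CC_eq_map B A h n₀]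
    rcases le_or_gt (EL B h m).length (EL B h n₀).length with hle | hlt
    · exact (rfL_mono Pr hle).map _
    · rw [hstable _ (le_of_lt hlt)]
  · rw [CC_eq_map B A h n₀]
    congr 1
    apply sorted_lt_eq
    · have hs := hf.toFinset.pairwise_sort (· ≤ ·)
      have hn := hf.toFinset.sort_nodup (· ≤ ·)
      exact (hs.and hn).imp (fun hab => lt_of_le_of_ne hab.1 hab.2)
    · exact rfL_pairwise _ _
    · intro x
      rw [Finset.mem_sort, Set.Finite.mem_toFinset, rfL_mem]
      constructor
      · intro hx
        exact ⟨hx, by have := hbound x hx; omega⟩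
      · intro hx
        exact hx.1

lemma WProj_inr (X : Ev (PCh P) V → Prop) (F : ℕ → Ev (PCh P) V) :
    WProj X (Sum.inr F) =
      @dite _ ({n | X (F n)}.Infinite) (Classical.propDecidable _)
        (fun _ => Sum.inr fun k => F (Nat.nth (fun n => X (F n)) k))
        (fun h => Sum.inl (((Set.not_infinite.mp h).toFinset.sort (· ≤ ·)).map F)) := rfl

end ProofAux

/-- For channel-compliant words `w ≈ u` respecting the channel
bounds `B`, the projections of the encoded words onto the events of any channel
participant `⟨p,q,i⟩` agree. -/
theorem enc_proj_channel_participant_agree {P : Type} {V : Type}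
    [Fintype P] [DecidableEq P] [Fintype V] [DecidableEq V]
    (B : P → P → Option ℕ) (w u : Word (Ev P V))
    (hwc : ChanCompliant w) (huc : ChanCompliant u)
    (hwB : RespectsBw B w) (huB : RespectsBw B u)
    (h : WIndist w u) :
    ∀ (p q : P) (b i : ℕ), B p q = some b → i < b →
      WProj (Ev.Active (Sum.inr (p, q, i) : PCh P)) (encWord B w) =
      WProj (Ev.Active (Sum.inr (p, q, i) : PCh P)) (encWord B u) := by
  intro p q b i hB hib
  cases w with
  | inl wv =>
    cases u with
    | inl uv =>
      have hind : Indist wv uv := h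
      have Hw1 : ∀ n, recvMsgs p q (wv.take n) <+: sendMsgs p q (wv.take n) :=
        fun n => hwc n p q
      have Hw2 : ∀ n, (sendMsgs p q (wv.take n)).length ≤ (recvMsgs p q (wv.take n)).length + b :=
        fun n => hwB p q b hB n
      have Hu1 : ∀ n, recvMsgs p q (uv.take n) <+: sendMsgs p q (uv.take n) :=
        fun n => huc n p q
      have Hu2 : ∀ n, (sendMsgs p q (uv.take n)).length ≤ (recvMsgs p q (uv.take n)).length + b :=
        fun n => huB p q b hB n
      have e1 : WProj (Ev.Active (Sum.inr (p, q, i) : PCh P)) (encWord B (Sum.inl wv)) =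
          Sum.inl ((encList B (fun _ _ => 0) (fun _ _ => 0) wv).filter
            (pdec (Sum.inr (p,q,i)))) := rfl
      have e2 : WProj (Ev.Active (Sum.inr (p, q, i) : PCh P)) (encWord B (Sum.inl uv)) =
          Sum.inl ((encList B (fun _ _ => 0) (fun _ _ => 0) uv).filter
            (pdec (Sum.inr (p,q,i)))) := rfl
      rw [e1, e2, main1 B p q b i hB wv Hw1 Hw2, main1 B p q b i hB uv Hu1 Hu2,
        Indist_sendMsgs_eq hind p q, Indist_recvMsgs_eq hind p q]
    | inr g => exact (h : False).elim
  | inr f =>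
    cases u with
    | inl uv => exact (h : False).elim
    | inr g =>
      obtain ⟨hfg, hgf⟩ : IPrefW f g ∧ IPrefW g f := h
      set A : PCh P := Sum.inr (p, q, i) with hA
      have hCf : ∀ n, CC B A f n
          = alt2 p q i (selS b i 0 (sendMsgs p q (preW f n))) (selS b i 0 (recvMsgs p q (preW f n))) :=
        fun n => main1 B p q b i hB (preW f n)
          (fun k => by rw [preW_take]; exact hwc (min k n) p q)
          (fun k => by rw [preW_take]; exact hwB p q b hB (min k n))
      have hCg : ∀ n, CC B A g n
          = alt2 p q i (selS b i 0 (sendMsgs p q (preW g n))) (selS b i 0 (recvMsgs p q (preW g n))) :=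
        fun n => main1 B p q b i hB (preW g n)
          (fun k => by rw [preW_take]; exact huc (min k n) p q)
          (fun k => by rw [preW_take]; exact huB p q b hB (min k n))
      have crossFG : ∀ n, ∃ m, CC B A f n <+: CC B A g m := by
        intro n
        obtain ⟨m, x, hind⟩ := hfg n
        refine ⟨m, ?_⟩
        rw [hCf n, hCg m]
        apply alt2_prefix
        · apply selS_prefix
          exact ⟨sendMsgs p q x, by rw [← sendMsgs_append]; exact Indist_sendMsgs_eq hind p q⟩
        · apply selS_prefix
          exact ⟨recvMsgs p q x, by rw [← recvMsgs_append]; exact Indist_recvMsgs_eq hind p q⟩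
      have crossGF : ∀ n, ∃ m, CC B A g n <+: CC B A f m := by
        intro n
        obtain ⟨m, x, hind⟩ := hgf n
        refine ⟨m, ?_⟩
        rw [hCg n, hCf m]
        apply alt2_prefix
        · apply selS_prefix
          exact ⟨sendMsgs p q x, by rw [← sendMsgs_append]; exact Indist_sendMsgs_eq hind p q⟩
        · apply selS_prefix
          exact ⟨recvMsgs p q x, by rw [← recvMsgs_append]; exact Indist_recvMsgs_eq hind p q⟩
      rw [encWord_inr, encWord_inr, WProj_inr, WProj_inr]
      by_cases hIf : {n | Ev.Active A (FF B f n)}.Infinite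
      · have hIg : {n | Ev.Active A (FF B g n)}.Infinite := by
          rw [infinite_iff B A g]
          intro K
          obtain ⟨n, hn⟩ := (infinite_iff B A f).mp hIf K
          obtain ⟨m, hm⟩ := crossFG n
          exact ⟨m, le_trans hn hm.length_le⟩
        rw [dif_pos hIf, dif_pos hIg]
        congr 1
        funext k
        obtain ⟨n, hn⟩ := (infinite_iff B A f).mp hIf (k+1)
        obtain ⟨m, hm⟩ := crossFG n
        have hkf : k < (CC B A f n).length := by omega
        have hkg : k < (CC B A g m).length := lt_of_lt_of_le hkf hm.length_le
        rw [FF_nth_eq B A f k n hkf, FF_nth_eq B A g k m hkg]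
        exact hm.getElem hkf
      · have hIg : ¬ {n | Ev.Active A (FF B g n)}.Infinite := by
          intro hg
          apply hIf
          rw [infinite_iff B A f]
          intro K
          obtain ⟨n, hn⟩ := (infinite_iff B A g).mp hg K
          obtain ⟨m, hm⟩ := crossGF n
          exact ⟨m, le_trans hn hm.length_le⟩
        rw [dif_neg hIf, dif_neg hIg]
        obtain ⟨n₀, hmonoF, hsortF⟩ := finite_branch B A f (Set.not_infinite.mp hIf)
        obtain ⟨m₀, hmonoG, hsortG⟩ := finite_branch B A g (Set.not_infinite.mp hIg)
        rw [hsortF, hsortG]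
        congr 1
        obtain ⟨m1, hm1⟩ := crossFG n₀
        obtain ⟨n1, hn1⟩ := crossGF m₀
        have h1 : CC B A f n₀ <+: CC B A g m₀ := hm1.trans (hmonoG m1)
        have h2 : CC B A g m₀ <+: CC B A f n₀ := hn1.trans (hmonoF n1)
        exact h1.eq_of_length (le_antisymm h1.length_le h2.length_le)

end AMP
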